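/- Let (Ω, ℱ, P) be a probability space and let Y : Ω → ℝ be a random variable taking values in {0, 1} almost surely, with p := P(Y = 1). Fix s₀ ∈ ℝ and γ ≥ 0. Let 𝒮 be the set of real numbers E[−S·Y] as S ranges over all measurable functions S : Ω → ℝ with s₀ − γ ≤ S ≤ s₀ + γ almost surely and E[S] = s₀. Then −s₀·p + γ·(1/2 − |p − 1/2|) is the greatest element of 𝒮 (equivalently, the greatest element is E[−s₀·Y] + γ·min(p, 1 − p)). -/

import Mathlib

open MeasureTheory

/-- Auxiliary: for a.e.-binary `Y` and integrable `S`, `∫ -(S⬝Y) = -∫_{Y=1} S`. -/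
lemma ade_aux_integral_prod
    {Ω : Type*} [MeasurableSpace Ω] (P : Measure Ω)
    (Y : Ω → ℝ) (hYm : Measurable Y)
    (hbin : ∀ᵐ ω ∂P, Y ω = 0 ∨ Y ω = 1)
    (S : Ω → ℝ) :
    ∫ ω, -(S ω * Y ω) ∂P = -∫ ω in {ω | Y ω = 1}, S ω ∂P := by
  have hAm : MeasurableSet {ω | Y ω = 1} := hYm (measurableSet_singleton 1)
  have hcong : ∀ᵐ ω ∂P, -(S ω * Y ω) = ({ω | Y ω = 1}).indicator (fun ω => -S ω) ω := by
    filter_upwards [hbin] with ω hω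
    by_cases h : ω ∈ {ω | Y ω = 1}
    · rw [Set.indicator_of_mem h]
      have : Y ω = 1 := h
      rw [this, mul_one]
    · rw [Set.indicator_of_notMem h]
      have : Y ω = 0 := hω.resolve_right h
      rw [this, mul_zero, neg_zero]
  rw [integral_congr_ae hcong, integral_indicator hAm, integral_neg]

/-- maximization half of Proposition 2 (binary outcome, single stratum).
For a binary outcome `Y` with `p = P(Y = 1)`, among all measurable scores `S` with
`s₀ - γ ≤ S ≤ s₀ + γ` a.s. and `E[S] = s₀`, the greatest value of `E[-S⬝Y]` is
`-s₀⬝p + γ⬝(1/2 - |p - 1/2|)`. -/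
theorem ade_upper_bound_binary_outcome
    {Ω : Type*} [MeasurableSpace Ω] (P : Measure Ω) [IsProbabilityMeasure P]
    (Y : Ω → ℝ) (hYm : Measurable Y)
    (hbin : ∀ᵐ ω ∂P, Y ω = 0 ∨ Y ω = 1)
    (p : ℝ) (hp : p = (P {ω | Y ω = 1}).toReal)
    (s₀ γ : ℝ) (hγ : 0 ≤ γ) :
    IsGreatest
      {v : ℝ | ∃ S : Ω → ℝ, Measurable S ∧
        (∀ᵐ ω ∂P, s₀ - γ ≤ S ω ∧ S ω ≤ s₀ + γ) ∧
        (∫ ω, S ω ∂P = s₀) ∧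
        v = ∫ ω, -(S ω * Y ω) ∂P}
      (-(s₀ * p) + γ * (1/2 - |p - 1/2|)) := by
  set A : Set Ω := {ω | Y ω = 1} with hAdef
  have hAm : MeasurableSet A := hYm (measurableSet_singleton 1)
  have hp0 : 0 ≤ p := hp ▸ ENNReal.toReal_nonneg
  have hp1 : p ≤ 1 := by
    rw [hp]
    exact ENNReal.toReal_le_of_le_ofReal one_pos.le (by simpa using prob_le_one)
  have hPA : (P A).toReal = p := hp.symm
  have hPAc : (P Aᶜ).toReal = 1 - p := by
    rw [prob_compl_eq_one_sub hAm,
      ENNReal.toReal_sub_of_le prob_le_one ENNReal.one_ne_top, ENNReal.toReal_one, hPA]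
  set m : ℝ := min p (1 - p) with hmdef
  have hm0 : 0 ≤ m := le_min hp0 (by linarith)
  have hmkey : γ * (1/2 - |p - 1/2|) = γ * m := by
    rcases le_total p (1/2) with h | h
    · rw [abs_of_nonpos (by linarith), hmdef, min_eq_left (by linarith)]; ring
    · rw [abs_of_nonneg (by linarith), hmdef, min_eq_right (by linarith)]; ring
  constructor
  · -- membership: construct the maximizing S
    set a : ℝ := γ * m / p with hadef
    set b : ℝ := γ * m / (1 - p) with hbdef
    have hap : a * p = γ * m := by
      rcases eq_or_ne p 0 with h | h
      · have hm : m = 0 := by rw [hmdef, h]; simp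
        rw [h, hm, mul_zero, mul_zero]
      · rw [hadef, div_mul_cancel₀ _ h]
    have hbp : b * (1 - p) = γ * m := by
      rcases eq_or_ne (1 - p) 0 with h | h
      · have hm : m = 0 := by
          have : p = 1 := by linarith
          rw [hmdef, this]; simp
        rw [h, hm, mul_zero, mul_zero]
      · rw [hbdef, div_mul_cancel₀ _ h]
    have ha0 : 0 ≤ a := by
      rw [hadef]; positivity
    have hb0 : 0 ≤ b := by
      have : 0 ≤ 1 - p := by linarith
      rw [hbdef]; positivity
    have haγ : a ≤ γ := by
      rcases eq_or_lt_of_le hp0 with h | h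
      · rw [hadef, ← h, div_zero]; exact hγ
      · rw [hadef, div_le_iff₀ h]
        have : m ≤ p := min_le_left _ _
        nlinarith
    have hbγ : b ≤ γ := by
      rcases eq_or_lt_of_le (show (0:ℝ) ≤ 1 - p by linarith) with h | h
      · rw [hbdef, ← h, div_zero]; exact hγ
      · rw [hbdef, div_le_iff₀ h]
        have : m ≤ 1 - p := min_le_right _ _
        nlinarith
    refine ⟨fun ω => A.indicator (fun _ => s₀ - a) ω + Aᶜ.indicator (fun _ => s₀ + b) ω,
      (measurable_const.indicator hAm).add (measurable_const.indicator hAm.compl), ?_, ?_, ?_⟩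
    · refine Filter.Eventually.of_forall fun ω => ?_
      dsimp only
      by_cases h : ω ∈ A
      · rw [Set.indicator_of_mem h, Set.indicator_of_notMem (by simpa using h)]
        constructor <;> linarith
      · rw [Set.indicator_of_notMem h, Set.indicator_of_mem (by simpa using h)]
        constructor <;> linarith
    · rw [integral_add ((integrable_const _).indicator hAm)
        ((integrable_const _).indicator hAm.compl),
        integral_indicator_const _ hAm, integral_indicator_const _ hAm.compl,
        measureReal_def, measureReal_def, hPA, hPAc, smul_eq_mul, smul_eq_mul]
      nlinarith [hap, hbp]
    · rw [ade_aux_integral_prod P Y hYm hbin]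
      have hSA : ∫ ω in A, (A.indicator (fun _ => s₀ - a) ω + Aᶜ.indicator (fun _ => s₀ + b) ω) ∂P
          = ∫ _ω in A, (s₀ - a) ∂P := by
        refine setIntegral_congr_fun hAm fun ω hω => ?_
        rw [Set.indicator_of_mem hω, Set.indicator_of_notMem (by simpa using hω), add_zero]
      rw [hSA, setIntegral_const, measureReal_def, hPA, smul_eq_mul, hmkey]
      nlinarith [hap]
  · -- upper bound
    rintro v ⟨S, hSm, hSb, hSmean, hv⟩
    have hSint : Integrable S P := by
      refine Integrable.mono' (integrable_const (|s₀| + γ)) hSm.aestronglyMeasurable ?_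
      filter_upwards [hSb] with ω ⟨h1, h2⟩
      rw [Real.norm_eq_abs, abs_le]
      constructor
      · have := neg_abs_le s₀; linarith
      · have := le_abs_self s₀; linarith
    rw [ade_aux_integral_prod P Y hYm hbin] at hv
    -- bound 1: via lower bound on S on A
    have h1 : (s₀ - γ) * p ≤ ∫ ω in A, S ω ∂P := by
      have := setIntegral_mono_ae (μ := P) (s := A) (integrable_const (s₀ - γ)).integrableOn
        hSint.integrableOn (by filter_upwards [hSb] with ω h; exact h.1)
      rwa [setIntegral_const, measureReal_def, hPA, smul_eq_mul, mul_comm p (s₀ - γ)] at this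
    -- bound 2: via upper bound on S on Aᶜ and the mean constraint
    have h2 : ∫ ω in Aᶜ, S ω ∂P ≤ (s₀ + γ) * (1 - p) := by
      have := setIntegral_mono_ae (μ := P) (s := Aᶜ) hSint.integrableOn
        (integrable_const (s₀ + γ)).integrableOn (by filter_upwards [hSb] with ω h; exact h.2)
      rwa [setIntegral_const, measureReal_def, hPAc, smul_eq_mul, mul_comm (1 - p) (s₀ + γ)] at this
    have hsplit : ∫ ω in A, S ω ∂P + ∫ ω in Aᶜ, S ω ∂P = s₀ := by
      rw [integral_add_compl hAm hSint, hSmean]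
    rw [hmkey, hv]
    rcases le_total p (1 - p) with h | h
    · have hmp : m = p := min_eq_left h
      rw [hmp]; nlinarith
    · have hmp : m = 1 - p := min_eq_right h
      rw [hmp]; nlinarith
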